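/- Combining the two previous facts: in the simplicial-partition construction with weights w_i(l) = 2^{k_i(l)}, where k_i(l) counts cells among Δ₁, …, Δ_i crossed by l, each Δ_{i+1} chosen from a (1/t_i)-cutting of (H, w_i) with t_i = Θ(√(n_i/z)) and n_i ≥ 2z, and with m = Θ(n/z) iterations, one has log₂ w_m(H) = O(√(n/z) + log |H|). Consequently, every line l ∈ H crosses at most k_m(l) ≤ log₂ w_m(H) = O(√r) cells, where r = n/z and |H| = r. -/

import Mathlib

open Classical

lemma sqrt_tele (a : ℝ) (ha : 2 ≤ a) :
    1 / Real.sqrt a ≤ 2 * (Real.sqrt a - Real.sqrt (a - 1)) := by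
  have ha0 : (0:ℝ) ≤ a := by linarith
  have hsa : 0 < Real.sqrt a := Real.sqrt_pos.2 (by linarith)
  have hmul : Real.sqrt a * Real.sqrt (a - 1) = Real.sqrt (a * (a - 1)) :=
    (Real.sqrt_mul ha0 _).symm
  have h3 : Real.sqrt (a * (a - 1)) ≤ a - 1/2 := by
    calc Real.sqrt (a * (a - 1)) ≤ Real.sqrt ((a - 1/2)^2) :=
          Real.sqrt_le_sqrt (by nlinarith)
    _ = a - 1/2 := Real.sqrt_sq (by linarith)
  rw [div_le_iff₀ hsa]
  have hsq : Real.sqrt a * Real.sqrt a = a := Real.mul_self_sqrt ha0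
  nlinarith [hmul, h3, hsq]

/-- Combining the weight-doubling bound with the bound on `∑ 1/t i`: in the
simplicial-partition construction with weights `2 ^ (k i l)` (where `k i l`
counts the cells among `Δ 1, …, Δ i` crossed by `l`), each `Δ (i+1)` chosen from
a `(1/t i)`-cutting of the current weighted set with `t i = c·√((n - i·z)/z)` and
`n - i·z ≥ 2z` for all iterations `i < m`, every line `l ∈ H` crosses at most
`k m l ≤ log₂ w_m(H) ≤ log₂ |H| + (2/(c·ln 2))·√(n/z) = O(√r + log |H|)` cells
(`r = n/z`). -/
theorem crossing_number_bound {L : Type*} (H : Finset L) (hH : H.Nonempty)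
    (Cross : L → ℕ → Prop)
    (n z m : ℕ) (hz : 0 < z) (hm : ∀ i < m, 2 * z ≤ n - i * z)
    (c : ℝ) (hc : 0 < c)
    (k : ℕ → L → ℕ) (hk0 : ∀ l, k 0 l = 0)
    (hkS : ∀ (i : ℕ) (l : L),
      k (i + 1) l = k i l + if Cross l (i + 1) then 1 else 0)
    (t : ℕ → ℝ) (ht : ∀ i, t i = c * Real.sqrt (((n - i * z : ℕ) : ℝ) / z))
    (hcut : ∀ i < m,
      ∑ l ∈ H.filter (fun l => Cross l (i + 1)), (2 : ℝ) ^ (k i l)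
        ≤ (∑ l ∈ H, (2 : ℝ) ^ (k i l)) / t i) :
    ∀ l ∈ H, (k m l : ℝ)
        ≤ Real.logb 2 H.card +
          (2 / (c * Real.log 2)) * Real.sqrt ((n : ℝ) / z) := by
  intro l hl
  have hzR : (0:ℝ) < z := by exact_mod_cast hz
  set W : ℕ → ℝ := fun i => ∑ x ∈ H, (2 : ℝ) ^ (k i x) with hW
  -- positivity of W
  have hWpos : ∀ i, 0 < W i := by
    intro i
    exact Finset.sum_pos (fun x _ => by positivity) hH
  -- basic facts about n - i*z for i < m
  have hkey : ∀ i < m, 2*z ≤ n - i*z ∧ i*z + 2*z ≤ n ∧ n - (i+1)*z = (n - i*z) - z := by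
    intro i hi
    have h1 := hm i hi
    have h2 : (i+1)*z = i*z + z := by ring
    set p := i*z with hp
    constructor
    · exact h1
    constructor
    · omega
    · omega
  -- t i is positive for i < m
  have htpos : ∀ i < m, 0 < t i := by
    intro i hi
    obtain ⟨h1, h2, _⟩ := hkey i hi
    have : (0:ℝ) < ((n - i*z : ℕ) : ℝ) := by
      have : 0 < n - i*z := by omega
      exact_mod_cast this
    rw [ht i]
    positivity
  -- step inequality : W (i+1) ≤ W i * (1 + 1 / t i)
  have hstep : ∀ i < m, W (i+1) ≤ W i * (1 + 1 / t i) := by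
    intro i hi
    have hterm : ∀ x, (2:ℝ) ^ (k (i+1) x)
        = (2:ℝ) ^ (k i x) + (if Cross x (i+1) then (2:ℝ) ^ (k i x) else 0) := by
      intro x
      rw [hkS i x]
      split <;> simp [pow_succ] <;> ring
    have hW1 : W (i+1) = W i + ∑ x ∈ H.filter (fun x => Cross x (i+1)), (2:ℝ) ^ (k i x) := by
      simp only [hW]
      rw [Finset.sum_congr rfl (fun x _ => hterm x), Finset.sum_add_distrib,
        Finset.sum_filter]
    have := hcut i hi
    rw [hW1]
    have : W (i+1) ≤ W i + W i / t i := by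
      rw [hW1]; linarith [hcut i hi]
    calc W i + ∑ x ∈ H.filter (fun x => Cross x (i+1)), (2:ℝ) ^ (k i x)
        ≤ W i + W i / t i := by linarith [hcut i hi]
      _ = W i * (1 + 1 / t i) := by ring
  -- W j ≤ W 0 * ∏
  have hprod : ∀ j ≤ m, W j ≤ W 0 * ∏ i ∈ Finset.range j, (1 + 1 / t i) := by
    intro j hj
    induction j with
    | zero => simp
    | succ j ih =>
      have hj' : j ≤ m := Nat.le_of_succ_le hj
      have hjm : j < m := hj
      have h1 : 0 < 1 + 1 / t j := by
        have := htpos j hjm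
        positivity
      calc W (j+1) ≤ W j * (1 + 1 / t j) := hstep j hjm
        _ ≤ (W 0 * ∏ i ∈ Finset.range j, (1 + 1 / t i)) * (1 + 1 / t j) := by
            exact mul_le_mul_of_nonneg_right (ih hj') h1.le
        _ = W 0 * ∏ i ∈ Finset.range (j+1), (1 + 1 / t i) := by
            rw [Finset.prod_range_succ]; ring
  -- single term bound
  have h2k : (2:ℝ)^(k m l) ≤ W m := by
    simp only [hW]
    exact Finset.single_le_sum (f := fun x => (2:ℝ)^(k m x)) (fun x _ => by positivity) hl
  set g : ℕ → ℝ := fun i => Real.sqrt (((n - i*z : ℕ):ℝ)/z) with hg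
  have hti : ∀ i < m, 1 / t i ≤ (2/c) * (g i - g (i+1)) := by
    intro i hi
    obtain ⟨h1, h2, h3⟩ := hkey i hi
    have hA : (2:ℝ)*z ≤ ((n - i*z : ℕ):ℝ) := by exact_mod_cast h1
    set A : ℝ := ((n - i*z : ℕ):ℝ) with hA'
    have ha2 : 2 ≤ A / z := by rw [le_div_iff₀ hzR]; linarith
    have hcast : ((n - (i+1)*z : ℕ):ℝ) = A - z := by
      rw [h3, Nat.cast_sub (show z ≤ n - i*z by omega)]
    have hgi1 : g (i+1) = Real.sqrt (A/z - 1) := by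
      simp only [hg, hcast]
      congr 1
      field_simp
    have hgi : g i = Real.sqrt (A/z) := by simp only [hg]; rfl
    rw [ht i, hgi1, hgi]
    calc 1 / (c * Real.sqrt (A/z)) = (1/c) * (1 / Real.sqrt (A/z)) := by ring
      _ ≤ (1/c) * (2 * (Real.sqrt (A/z) - Real.sqrt (A/z - 1))) :=
          mul_le_mul_of_nonneg_left (sqrt_tele _ ha2) (by positivity)
      _ = (2/c) * (Real.sqrt (A/z) - Real.sqrt (A/z - 1)) := by ring
  have hsum : ∑ i ∈ Finset.range m, 1 / t i ≤ (2/c) * Real.sqrt ((n:ℝ)/z) := by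
    have h1 : ∑ i ∈ Finset.range m, 1 / t i
        ≤ ∑ i ∈ Finset.range m, (2/c) * (g i - g (i+1)) :=
      Finset.sum_le_sum (fun i hi => hti i (Finset.mem_range.1 hi))
    have h2 : ∑ i ∈ Finset.range m, (2/c) * (g i - g (i+1)) = (2/c) * (g 0 - g m) := by
      rw [← Finset.mul_sum, Finset.sum_range_sub']
    have h3 : g 0 = Real.sqrt ((n:ℝ)/z) := by simp [hg]
    have h4 : 0 ≤ g m := Real.sqrt_nonneg _
    have h5 : (0:ℝ) ≤ 2/c := by positivity
    calc ∑ i ∈ Finset.range m, 1 / t i ≤ (2/c)*(g 0 - g m) := by rw [← h2]; exact h1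
      _ ≤ (2/c)*(g 0) := by nlinarith
      _ = (2/c) * Real.sqrt ((n:ℝ)/z) := by rw [h3]
  have hW0 : W 0 = H.card := by simp [hW, hk0]
  have hfac : ∀ i ∈ Finset.range m, (0:ℝ) < 1 + 1/t i := fun i hi => by
    have := htpos i (Finset.mem_range.1 hi); positivity
  have hlogW : Real.log (W m) ≤ Real.log (H.card) + (2/c) * Real.sqrt ((n:ℝ)/z) := by
    have h1 : Real.log (W m) ≤ Real.log (W 0 * ∏ i ∈ Finset.range m, (1 + 1/t i)) :=
      Real.log_le_log (hWpos m) (hprod m le_rfl)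
    have h2 : Real.log (W 0 * ∏ i ∈ Finset.range m, (1 + 1/t i))
        = Real.log (W 0) + ∑ i ∈ Finset.range m, Real.log (1 + 1/t i) := by
      rw [Real.log_mul (hWpos 0).ne' (Finset.prod_pos hfac).ne',
        Real.log_prod (fun i hi => (hfac i hi).ne')]
    have h3 : ∑ i ∈ Finset.range m, Real.log (1 + 1/t i)
        ≤ ∑ i ∈ Finset.range m, 1/t i :=
      Finset.sum_le_sum (fun i hi => by
        have h := Real.log_le_sub_one_of_pos (hfac i hi); linarith)
    have h4 : Real.log (W 0) = Real.log (H.card) := by rw [hW0]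
    linarith [hsum]
  have hlog2 : (0:ℝ) < Real.log 2 := Real.log_pos one_lt_two
  have hkl : (k m l : ℝ) * Real.log 2 ≤ Real.log (W m) := by
    rw [← Real.log_pow]
    exact Real.log_le_log (by positivity) h2k
  have hmain : (k m l : ℝ)
      ≤ (Real.log (H.card) + (2/c)*Real.sqrt ((n:ℝ)/z)) / Real.log 2 := by
    rw [le_div_iff₀ hlog2]
    linarith
  calc (k m l : ℝ) ≤ (Real.log (H.card) + (2/c)*Real.sqrt ((n:ℝ)/z)) / Real.log 2 := hmain
    _ = Real.logb 2 H.card + (2 / (c * Real.log 2)) * Real.sqrt ((n:ℝ)/z) := by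
        rw [Real.logb]
        field_simp
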